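/- arXiv:1001.1639 — 2 statements merged into one kernel-verified Lean document; each statement's English description precedes it below -/
import Mathlib

section
/- O_E[N]^G is the unique maximal O_K-order in the commutative K-algebra H = E[N]^G; equivalently, O_E[N]^G equals the integral closure of O_K in E[N]^G. -/
/-! Common setting: `K` a `p`-adic field, `L/K` finite separable with Galois
closure `E/K` (realised as an intermediate field of `E`), `G = Gal(E/K)`,
`G' = fixingSubgroup L`, `X = G ⧸ G'`, `λ` the left-translation embedding,
`N` a regular subgroup of `Perm X` normalised by `λ(G)` (given abstractly via an
injective `ι : N →* Perm X` together with the conjugation action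
`c : G →* MulAut N`), and `H = E[N]^G` the Greither–Pareigis Hopf algebra. -/

noncomputable section

variable (p : ℕ) [Fact p.Prime]
variable (K E : Type) [Field K] [Field E]
  [Algebra ℚ_[p] K] [FiniteDimensional ℚ_[p] K]
  [Algebra ℚ_[p] E] [FiniteDimensional ℚ_[p] E]
  [Algebra ℤ_[p] E] [IsScalarTower ℤ_[p] ℚ_[p] E]
  [Algebra K E] [IsScalarTower ℚ_[p] K E] [FiniteDimensional K E] [IsGalois K E]
  (L : IntermediateField K E)
  (N : Type) [CommGroup N] [Fintype N]
  (ι : N →* Equiv.Perm ((E ≃ₐ[K] E) ⧸ L.fixingSubgroup))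
  (c : (E ≃ₐ[K] E) →* MulAut N)

/-- The left-translation embedding `λ : G → Perm (G ⧸ G')`. -/
def lam : (E ≃ₐ[K] E) →* Equiv.Perm ((E ≃ₐ[K] E) ⧸ L.fixingSubgroup) :=
  MulAction.toPermHom _ _

/-- The semilinear action of `g ∈ G` on the group algebra `E[N]`:
on coefficients as the Galois automorphism `g`, on group elements by
conjugation through `λ` (encoded by the `MulAut`-valued homomorphism `c`). -/
def galTwist (g : E ≃ₐ[K] E) (z : MonoidAlgebra E N) : MonoidAlgebra E N :=
  MonoidAlgebra.ofCoeff (Finsupp.mapDomain (c g) (Finsupp.mapRange g (map_zero g) z.coeff))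

/-- A representative `σₙ ∈ G` of the coset `(ι n)⁻¹ (1·G') ∈ X`. -/
def sigma (n : N) : E ≃ₐ[K] E :=
  Quotient.out ((ι n)⁻¹
    (QuotientGroup.mk (1 : E ≃ₐ[K] E) : (E ≃ₐ[K] E) ⧸ L.fixingSubgroup))

/-- The Hopf–Galois action of the Greither–Pareigis Hopf algebra on `E` (it
restricts to the action on `L`): `(Σ cₙ n) · x = Σ cₙ σₙ(x)`. -/
def hopfAct (z : MonoidAlgebra E N) (x : E) : E :=
  z.coeff.sum fun n cn => cn * sigma K E L N ι n x

/-- The valuation ring `O_L`, as a subset of `E`: the elements of `L` integral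
over `ℤ_[p]`. -/
def OL : Set E := {x : E | x ∈ L ∧ x ∈ integralClosure ℤ_[p] E}

/-- The set of `G`-fixed points of `E[N]`, i.e. the Hopf algebra `H = E[N]^G`. -/
def Hset : Set (MonoidAlgebra E N) := {z | ∀ g : E ≃ₐ[K] E, galTwist K E N c g z = z}

/-- The associated order `A_H = {h ∈ H | h · O_L ⊆ O_L}`. -/
def AH : Set (MonoidAlgebra E N) :=
  {z | z ∈ Hset K E N c ∧ ∀ x ∈ OL p K E L, hopfAct K E L N ι z x ∈ OL p K E L}

/-- `O_E[N]^G`: the `G`-fixed elements of the integral group ring. -/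
def OEN : Set (MonoidAlgebra E N) :=
  {z | z ∈ Hset K E N c ∧ ∀ n : N, z.coeff n ∈ integralClosure ℤ_[p] E}

/-- The integral closure of `O_K` in `H` (equivalently, of `ℤ_[p]`),
i.e. the unique maximal order of the commutative separable algebra `H`. -/
def MaxOrd : Set (MonoidAlgebra E N) :=
  {z | z ∈ Hset K E N c ∧ IsIntegral ℤ_[p] z}

/-- `O_L` is a free `A_H`-module (necessarily of rank one). -/
def IsFreeRankOne : Prop :=
  ∃ b ∈ OL p K E L, ∀ x ∈ OL p K E L,
    ∃! z : MonoidAlgebra E N, z ∈ AH p K E L N ι c ∧ hopfAct K E L N ι z b = x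

end


open Polynomial in
lemma aux_int_of_pow {R A : Type*} [CommRing R] [CommRing A] [Algebra R A]
    {x : A} {m : ℕ} (hm : m ≠ 0) (hx : x ^ m = 1) : IsIntegral R x := by
  refine ⟨X ^ m - C 1, monic_X_pow_sub_C 1 hm, ?_⟩
  simp [eval₂_sub, hx]

lemma aux_orth {N F : Type*} [CommGroup N] [Fintype N] [Field F]
    [HasEnoughRootsOfUnity F (Monoid.exponent N)] [Fintype (N →* Fˣ)] [DecidableEq N] (h : N) :
    ∑ φ : N →* Fˣ, ((φ h : Fˣ) : F) = if h = 1 then (Fintype.card N : F) else 0 := by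
  split_ifs with hh
  · subst hh
    have e := (CommGroup.monoidHom_mulEquiv_of_hasEnoughRootsOfUnity N F).some
    simp [Finset.card_univ, ← Nat.card_eq_fintype_card, Nat.card_congr e.toEquiv]
  · obtain ⟨ψ, hψ⟩ := CommGroup.exists_apply_ne_one_of_hasEnoughRootsOfUnity N F hh
    refine eq_zero_of_mul_eq_self_left (b := ((ψ h : Fˣ) : F))
      (fun e => hψ (Units.ext e)) ?_
    rw [Finset.mul_sum]
    exact Fintype.sum_bijective _ (Group.mulLeft_bijective ψ) _ _ fun φ => by
      simp [MonoidHom.mul_apply]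

/-- if `p ∤ [L:K]` then `O_E[N]^G` is the unique maximal
`O_K`-order in `H = E[N]^G`, i.e. it equals the integral closure of `O_K`
in `E[N]^G`. -/
theorem statement8
    (p : ℕ) [Fact p.Prime]
    (K E : Type) [Field K] [Field E]
    [Algebra ℚ_[p] K] [FiniteDimensional ℚ_[p] K]
    [Algebra ℚ_[p] E] [FiniteDimensional ℚ_[p] E]
    [Algebra ℤ_[p] E] [IsScalarTower ℤ_[p] ℚ_[p] E]
    [Algebra K E] [IsScalarTower ℚ_[p] K E] [FiniteDimensional K E] [IsGalois K E]
    (L : IntermediateField K E)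
    (hclosure : IntermediateField.normalClosure K L E = ⊤)
    (hdeg : ¬ (p ∣ Module.finrank K L))
    (N : Type) [CommGroup N] [Fintype N]
    (ι : N →* Equiv.Perm ((E ≃ₐ[K] E) ⧸ L.fixingSubgroup))
    (hι : Function.Injective ι)
    (hcard : Nat.card N = Nat.card ((E ≃ₐ[K] E) ⧸ L.fixingSubgroup))
    (htrans : ∀ x y : (E ≃ₐ[K] E) ⧸ L.fixingSubgroup, ∃ n : N, ι n x = y)
    (c : (E ≃ₐ[K] E) →* MulAut N)
    (hc : ∀ (g : E ≃ₐ[K] E) (n : N),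
      ι (c g n) = lam K E L g * ι n * (lam K E L g)⁻¹) :
    OEN p K E N c = MaxOrd p K E N c := by
  classical
  have hCharE : CharZero E := charZero_of_injective_algebraMap (algebraMap ℚ_[p] E).injective
  haveI : FiniteDimensional L E := FiniteDimensional.right K L E
  -- cardinality computation: Nat.card N = [L : K]
  have hNcard : Nat.card N = Module.finrank K L := by
    rw [hcard]
    have h2 : Nat.card L.fixingSubgroup * L.fixingSubgroup.index = Nat.card (E ≃ₐ[K] E) :=
      Subgroup.card_mul_index _
    have h3 : Nat.card L.fixingSubgroup = Module.finrank L E := by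
      rw [Nat.card_congr (IntermediateField.fixingSubgroupEquiv L).toEquiv]
      exact IsGalois.card_aut_eq_finrank L E
    have h4 : Nat.card (E ≃ₐ[K] E) = Module.finrank K E := by
      exact IsGalois.card_aut_eq_finrank K E
    have h5 : Module.finrank K L * Module.finrank L E = Module.finrank K E :=
      Module.finrank_mul_finrank K L E
    have h6 : 0 < Module.finrank L E := Module.finrank_pos
    rw [h3, h4] at h2
    have h7 : Module.finrank L E * L.fixingSubgroup.index
        = Module.finrank L E * Module.finrank K L := by
      rw [h2, ← h5, mul_comm]
    have h8 : L.fixingSubgroup.index = Module.finrank K L :=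
      Nat.eq_of_mul_eq_mul_left h6 h7
    exact h8
  have hm0 : Fintype.card N ≠ 0 := Fintype.card_ne_zero
  have hpm : ¬ p ∣ Fintype.card N := by
    rw [← Nat.card_eq_fintype_card, hNcard]; exact hdeg
  ext z
  simp only [OEN, MaxOrd, Set.mem_setOf_eq, and_congr_right_iff]
  intro hz
  constructor
  · -- integral coefficients ⇒ integral
    intro hcoef
    have hzdec : z = ∑ n ∈ z.coeff.support, MonoidAlgebra.single n (z.coeff n) :=
      (MonoidAlgebra.sum_coeff_single z).symm
    rw [hzdec]
    refine Subalgebra.sum_mem (integralClosure ℤ_[p] (MonoidAlgebra E N)) fun n _ => ?_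
    have h1 : MonoidAlgebra.single (1 : N) (z.coeff n)
        ∈ integralClosure ℤ_[p] (MonoidAlgebra E N) := by
      have hint : IsIntegral ℤ_[p] (z.coeff n) := hcoef n
      have := hint.map ((Algebra.ofId E (MonoidAlgebra E N)).restrictScalars ℤ_[p])
      simpa [Algebra.ofId_apply, mem_integralClosure_iff] using this
    have h2 : MonoidAlgebra.single n (1 : E)
        ∈ integralClosure ℤ_[p] (MonoidAlgebra E N) :=
      aux_int_of_pow hm0 (by rw [MonoidAlgebra.single_pow, pow_card_eq_one, one_pow]; rfl)
    have := mul_mem h1 h2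
    rwa [MonoidAlgebra.single_mul_single, one_mul, mul_one] at this
  · -- integral ⇒ integral coefficients
    intro hz2 n
    set Ebar := AlgebraicClosure E with hEbar
    haveI : CharZero Ebar := charZero_of_injective_algebraMap (algebraMap E Ebar).injective
    haveI : NeZero ((Monoid.exponent N : ℕ) : Ebar) :=
      ⟨Nat.cast_ne_zero.mpr Monoid.exponent_ne_zero_of_finite⟩
    haveI : Finite (N →* Ebarˣ) := Finite.of_equiv N
      (CommGroup.monoidHom_mulEquiv_of_hasEnoughRootsOfUnity N Ebar).some.toEquiv.symm
    letI : Fintype (N →* Ebarˣ) := Fintype.ofFinite _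
    have expand : ∀ φ : N →* Ebarˣ,
        (MonoidAlgebra.lift E Ebar N ((Units.coeHom Ebar).comp φ)) z
          = ∑ g ∈ z.coeff.support, algebraMap E Ebar (z.coeff g) * ((φ g : Ebarˣ) : Ebar) := fun φ => by
      rw [MonoidAlgebra.lift_apply']
      rfl
    have key : ∑ φ : N →* Ebarˣ, ((φ n⁻¹ : Ebarˣ) : Ebar) *
        (MonoidAlgebra.lift E Ebar N ((Units.coeHom Ebar).comp φ)) z
        = (Fintype.card N : Ebar) * algebraMap E Ebar (z.coeff n) := by
      have step1 : ∀ φ : N →* Ebarˣ, ((φ n⁻¹ : Ebarˣ) : Ebar) *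
          (MonoidAlgebra.lift E Ebar N ((Units.coeHom Ebar).comp φ)) z
          = ∑ g ∈ z.coeff.support, algebraMap E Ebar (z.coeff g) * ((φ (n⁻¹ * g) : Ebarˣ) : Ebar) :=
        fun φ => by
          rw [expand φ, Finset.mul_sum]
          exact Finset.sum_congr rfl fun g _ => by rw [map_mul, Units.val_mul]; ring
      calc ∑ φ : N →* Ebarˣ, ((φ n⁻¹ : Ebarˣ) : Ebar) *
            (MonoidAlgebra.lift E Ebar N ((Units.coeHom Ebar).comp φ)) z
          = ∑ φ : N →* Ebarˣ, ∑ g ∈ z.coeff.support,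
              algebraMap E Ebar (z.coeff g) * ((φ (n⁻¹ * g) : Ebarˣ) : Ebar) :=
            Finset.sum_congr rfl fun φ _ => step1 φ
        _ = ∑ g ∈ z.coeff.support, ∑ φ : N →* Ebarˣ,
              algebraMap E Ebar (z.coeff g) * ((φ (n⁻¹ * g) : Ebarˣ) : Ebar) := Finset.sum_comm
        _ = ∑ g ∈ z.coeff.support, algebraMap E Ebar (z.coeff g) *
              (if n⁻¹ * g = 1 then (Fintype.card N : Ebar) else 0) := by
            refine Finset.sum_congr rfl fun g _ => ?_
            rw [← Finset.mul_sum, aux_orth]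
        _ = (Fintype.card N : Ebar) * algebraMap E Ebar (z.coeff n) := by
            simp only [inv_mul_eq_one, mul_ite, mul_zero]
            rw [Finset.sum_ite_eq]
            by_cases hn : n ∈ z.coeff.support
            · rw [if_pos hn, mul_comm]
            · rw [if_neg hn, Finsupp.notMem_support_iff.mp hn, map_zero, mul_zero]
    have hsum_int : IsIntegral ℤ_[p] ((Fintype.card N : Ebar) * algebraMap E Ebar (z.coeff n)) := by
      rw [← key]
      refine Subalgebra.sum_mem (integralClosure ℤ_[p] Ebar) fun φ _ => mul_mem ?_ ?_
      · exact aux_int_of_pow hm0 (by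
          rw [← Units.val_pow_eq_pow_val, ← map_pow, pow_card_eq_one, map_one, Units.val_one])
      · exact hz2.map ((MonoidAlgebra.lift E Ebar N
          ((Units.coeHom Ebar).comp φ)).restrictScalars ℤ_[p])
    have hj : IsIntegral ℤ_[p] ((Fintype.card N : E) * z.coeff n) := by
      rw [show (Fintype.card N : Ebar) * algebraMap E Ebar (z.coeff n)
          = algebraMap E Ebar ((Fintype.card N : E) * z.coeff n) by rw [map_mul, map_natCast]] at hsum_int
      exact (isIntegral_algHom_iff (IsScalarTower.toAlgHom ℤ_[p] E Ebar)
        (algebraMap E Ebar).injective).mp hsum_int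
    have hunit : IsUnit ((Fintype.card N : ℤ_[p])) := by
      rw [PadicInt.isUnit_iff]
      by_contra hne
      have hlt : ‖(Fintype.card N : ℤ_[p])‖ < 1 :=
        lt_of_le_of_ne (PadicInt.norm_le_one _) hne
      rw [show ((Fintype.card N : ℤ_[p])) = ((Fintype.card N : ℤ) : ℤ_[p]) by push_cast; ring,
        PadicInt.norm_int_lt_one_iff_dvd] at hlt
      exact hpm (Int.ofNat_dvd.mp (by exact_mod_cast hlt))
    obtain ⟨u, hu⟩ := hunit
    have hzn : z.coeff n = (↑u⁻¹ : ℤ_[p]) • ((Fintype.card N : E) * z.coeff n) := by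
      rw [Algebra.smul_def, ← mul_assoc,
        show ((Fintype.card N : E)) = algebraMap ℤ_[p] E (Fintype.card N : ℤ_[p]) by
          rw [map_natCast],
        ← hu, ← map_mul, Units.inv_mul, map_one, one_mul]
    rw [hzn]
    exact Subalgebra.smul_mem _ hj _
end

section
/- A_H = O_E[N]^G, and this is the unique maximal O_K-order in H (the integral closure of O_K in H). -/
open Polynomial in
lemma aux_isIntegral_trace_matrix {R F ι : Type*} [CommRing R] [Field F] [Algebra R F]
    [Fintype ι] [DecidableEq ι] [Nonempty ι]
    (M : Matrix ι ι F) (P : R[X]) (hP : P.Monic)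
    (h0 : Polynomial.aeval M P = 0) : IsIntegral R M.trace := by
  set Fb := AlgebraicClosure F
  let f : F →ₐ[R] Fb := IsScalarTower.toAlgHom R F Fb
  set M' : Matrix ι ι Fb := M.map (algebraMap F Fb) with hM'def
  have hM' : Polynomial.aeval M' P = 0 := by
    have : M' = (AlgHom.mapMatrix f) M := rfl
    rw [this, Polynomial.aeval_algHom_apply, h0, map_zero]
  have htr : M'.trace = algebraMap F Fb M.trace := by
    simp [Matrix.trace, Matrix.map_apply, map_sum, M']
  rw [← isIntegral_algebraMap_iff (algebraMap F Fb).injective, ← htr,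
    Matrix.trace_eq_sum_roots_charpoly M']
  refine IsIntegral.multiset_sum ?_
  intro μ hμ
  have hroot : (Matrix.charpoly M').IsRoot μ :=
    Polynomial.isRoot_of_mem_roots hμ
  -- μ is in the spectrum of M'
  have hdet : (Matrix.scalar ι μ - M').det = 0 := by
    have h1 : Polynomial.eval μ (Matrix.charpoly M') = 0 := hroot
    rw [Matrix.charpoly, _root_.eval_det, Matrix.matPolyEquiv_charmatrix] at h1
    simpa using h1
  have hspec : μ ∈ spectrum Fb M' := by
    rw [spectrum.mem_iff]
    intro hu
    rw [Matrix.isUnit_iff_isUnit_det] at hu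
    rw [show (algebraMap Fb (Matrix ι ι Fb)) μ - M' = Matrix.scalar ι μ - M' by
      rw [Matrix.algebraMap_eq_diagonal]; rfl] at hu
    rw [hdet] at hu
    exact hu.ne_zero rfl
  have hmem := spectrum.subset_polynomial_aeval M' (P.map (algebraMap R Fb))
    ⟨μ, hspec, rfl⟩
  have haev : Polynomial.aeval M' (P.map (algebraMap R Fb)) = 0 := by
    rw [Polynomial.aeval_map_algebraMap, hM']
  rw [haev, spectrum.zero_eq] at hmem
  refine ⟨P, hP, ?_⟩
  have : Polynomial.eval μ (P.map (algebraMap R Fb)) = 0 := Set.mem_singleton_iff.mp hmem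
  rwa [← Polynomial.eval_map]

open Polynomial MonoidAlgebra in
lemma aux_coeff_integral {p : ℕ} [Fact p.Prime] {E N : Type} [Field E] [Algebra ℤ_[p] E]
    [CommGroup N] [Fintype N]
    (hp : ¬ p ∣ Fintype.card N)
    (z : MonoidAlgebra E N) (hz : IsIntegral ℤ_[p] z) (n : N) :
    z.coeff n ∈ integralClosure ℤ_[p] E := by
  classical
  set w : MonoidAlgebra E N := z * MonoidAlgebra.single n⁻¹ 1 with hw
  have hw1 : w.coeff 1 = z.coeff n := by
    rw [hw, MonoidAlgebra.coeff_mul_single_apply]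
    simp
  have hsint : IsIntegral ℤ_[p] (MonoidAlgebra.single (n⁻¹ : N) (1 : E)) := by
    refine ⟨X ^ (Fintype.card N) - C 1, monic_X_pow_sub_C (1:ℤ_[p]) Fintype.card_ne_zero, ?_⟩
    rw [eval₂_sub, eval₂_pow, eval₂_X, eval₂_C]
    rw [MonoidAlgebra.single_pow]
    simp [pow_card_eq_one, MonoidAlgebra.one_def]
  have hwint : IsIntegral ℤ_[p] w := hz.mul hsint
  obtain ⟨P, hPm, hPw⟩ := hwint
  let b : Module.Basis N E (MonoidAlgebra E N) := MonoidAlgebra.basis N E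
  let Ψ : MonoidAlgebra E N →ₐ[E] Matrix N N E :=
    (LinearMap.toMatrixAlgEquiv b).toAlgHom.comp (Algebra.lmul E (MonoidAlgebra E N))
  let M : Matrix N N E := Ψ w
  have hM0 : Polynomial.aeval M P = 0 := by
    have h1 : Polynomial.aeval w P = 0 := by rwa [Polynomial.aeval_def]
    have h2 := Polynomial.aeval_algHom_apply (Ψ.restrictScalars ℤ_[p]) w P
    rw [h1, map_zero] at h2
    exact h2
  have htr : M.trace = (Fintype.card N : E) * w.coeff 1 := by
    have hdiag : ∀ m : N, M m m = w.coeff 1 := by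
      intro m
      have h3 : M m m = b.repr ((Algebra.lmul E (MonoidAlgebra E N) w) (b m)) m :=
        LinearMap.toMatrixAlgEquiv_apply b _ m m
      have h4 : (b.repr (((Algebra.lmul E (MonoidAlgebra E N)) w) (b m))) m
          = (w * MonoidAlgebra.single m 1 : MonoidAlgebra E N).coeff m := rfl
      rw [h3, h4]
      rw [MonoidAlgebra.coeff_mul_single_apply]
      simp
    rw [Matrix.trace]
    simp only [Matrix.diag_apply, hdiag]
    rw [Finset.sum_const, Finset.card_univ, nsmul_eq_mul]
  have htri : IsIntegral ℤ_[p] ((Fintype.card N : E) * w.coeff 1) := by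
    rw [← htr]
    exact aux_isIntegral_trace_matrix M P hPm hM0
  have hunit : IsUnit ((Fintype.card N : ℤ_[p])) := by
    rw [PadicInt.isUnit_iff]
    have h1 : ‖((Fintype.card N : ℤ) : ℤ_[p])‖ < 1 ↔ (p:ℤ) ∣ (Fintype.card N : ℤ) :=
      PadicInt.norm_int_lt_one_iff_dvd _
    have h2 : ¬ ((p:ℤ) ∣ (Fintype.card N : ℤ)) := by exact_mod_cast hp
    have h3 : ‖((Fintype.card N : ℤ_[p]))‖ ≤ 1 := PadicInt.norm_le_one _
    rcases lt_or_eq_of_le h3 with h | h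
    · exact absurd (h1.mp (by exact_mod_cast h)) h2
    · exact h
  obtain ⟨u, hu⟩ := hunit.exists_left_inv
  have hfin : z.coeff n = algebraMap ℤ_[p] E u * ((Fintype.card N : E) * w.coeff 1) := by
    rw [← hw1, ← mul_assoc]
    have h4 : algebraMap ℤ_[p] E u * (Fintype.card N : E) = 1 := by
      rw [show ((Fintype.card N : E)) = algebraMap ℤ_[p] E (Fintype.card N : ℤ_[p]) by
        rw [map_natCast], ← map_mul, hu, map_one]
    rw [h4, one_mul]
  rw [hfin]
  exact (isIntegral_algebraMap).mul htri


noncomputable section AuxCtx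

variable (p : ℕ) [Fact p.Prime]
variable (K E : Type) [Field K] [Field E]
  [Algebra ℚ_[p] K] [FiniteDimensional ℚ_[p] K]
  [Algebra ℚ_[p] E] [FiniteDimensional ℚ_[p] E]
  [Algebra ℤ_[p] E] [IsScalarTower ℤ_[p] ℚ_[p] E]
  [Algebra K E] [IsScalarTower ℚ_[p] K E] [FiniteDimensional K E] [IsGalois K E]
  (L : IntermediateField K E)
  (N : Type) [CommGroup N] [Fintype N]
  (ι : N →* Equiv.Perm ((E ≃ₐ[K] E) ⧸ L.fixingSubgroup))
  (c : (E ≃ₐ[K] E) →* MulAut N)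

/-- `⟦σ_n⟧ = (ι n)⁻¹ ⟦1⟧`. -/
lemma aux_mk_sigma (n : N) :
    (QuotientGroup.mk (sigma K E L N ι n) : (E ≃ₐ[K] E) ⧸ L.fixingSubgroup)
      = (ι n)⁻¹ (QuotientGroup.mk 1) :=
  Quotient.out_eq _

lemma aux_apply_eq_of_mk_eq {a b : E ≃ₐ[K] E}
    (h : (QuotientGroup.mk a : (E ≃ₐ[K] E) ⧸ L.fixingSubgroup) = QuotientGroup.mk b)
    {x : E} (hx : x ∈ L) : a x = b x := by
  rw [QuotientGroup.eq] at h
  have h2 : (a⁻¹ * b) x = x := (L.mem_fixingSubgroup_iff (a⁻¹ * b)).mp h x hx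
  have h3 : a ((a⁻¹ * b) x) = b x := by
    rw [← AlgEquiv.mul_apply, ← mul_assoc, mul_inv_cancel, one_mul]
  rw [h2] at h3
  exact h3

lemma aux_lam_mk (g h : E ≃ₐ[K] E) :
    lam K E L g (QuotientGroup.mk h) = QuotientGroup.mk (g * h) := rfl

/-- key coset identity from normalization: `⟦g σ_k⟧ = (ι (c g k))⁻¹ ⟦g⟧`. -/
lemma aux_mk_mul_sigma
    (hc : ∀ (g : E ≃ₐ[K] E) (n : N),
      ι (c g n) = lam K E L g * ι n * (lam K E L g)⁻¹)
    (g : E ≃ₐ[K] E) (k : N) :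
    (QuotientGroup.mk (g * sigma K E L N ι k) : (E ≃ₐ[K] E) ⧸ L.fixingSubgroup)
      = (ι (c g k))⁻¹ (QuotientGroup.mk g) := by
  rw [hc g k]
  simp only [mul_inv_rev, inv_inv, Equiv.Perm.mul_apply]
  have h1 : (lam K E L g)⁻¹ (QuotientGroup.mk g) = QuotientGroup.mk 1 := by
    rw [← map_inv, aux_lam_mk, inv_mul_cancel]
  rw [h1, ← aux_mk_sigma, aux_lam_mk]

/-- For `g` fixing `L`: `g (σ_k x) = σ_{c g k} x` for `x ∈ L`. -/
lemma aux_sigma_fix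
    (hc : ∀ (g : E ≃ₐ[K] E) (n : N),
      ι (c g n) = lam K E L g * ι n * (lam K E L g)⁻¹)
    {g : E ≃ₐ[K] E} (hg : g ∈ L.fixingSubgroup) (k : N) {x : E} (hx : x ∈ L) :
    g (sigma K E L N ι k x) = sigma K E L N ι (c g k) x := by
  have h0 : (QuotientGroup.mk g : (E ≃ₐ[K] E) ⧸ L.fixingSubgroup) = QuotientGroup.mk 1 := by
    rw [QuotientGroup.eq]
    simpa using inv_mem hg
  have h1 : (QuotientGroup.mk (g * sigma K E L N ι k) : (E ≃ₐ[K] E) ⧸ L.fixingSubgroup)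
      = QuotientGroup.mk (sigma K E L N ι (c g k)) := by
    rw [aux_mk_mul_sigma K E L N ι c hc, h0, ← aux_mk_sigma]
  have := aux_apply_eq_of_mk_eq K E L h1 hx
  rw [AlgEquiv.mul_apply] at this
  exact this

/-- `σ_m (σ_k x) = σ_{(c σ_m k) * m} x` for `x ∈ L`. -/
lemma aux_sigma_sigma
    (hc : ∀ (g : E ≃ₐ[K] E) (n : N),
      ι (c g n) = lam K E L g * ι n * (lam K E L g)⁻¹)
    (m k : N) {x : E} (hx : x ∈ L) :
    sigma K E L N ι m (sigma K E L N ι k x)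
      = sigma K E L N ι (c (sigma K E L N ι m) k * m) x := by
  have h1 : (QuotientGroup.mk (sigma K E L N ι m * sigma K E L N ι k)
        : (E ≃ₐ[K] E) ⧸ L.fixingSubgroup)
      = QuotientGroup.mk (sigma K E L N ι (c (sigma K E L N ι m) k * m)) := by
    rw [aux_mk_mul_sigma K E L N ι c hc, aux_mk_sigma K E L N ι m,
      aux_mk_sigma K E L N ι (c (sigma K E L N ι m) k * m)]
    rw [show (c (sigma K E L N ι m) k * m) = m * c (sigma K E L N ι m) k from mul_comm _ _]
    rw [map_mul]
    simp [Equiv.Perm.mul_apply]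
  have := aux_apply_eq_of_mk_eq K E L h1 hx
  rw [AlgEquiv.mul_apply] at this
  exact this

/-- `σ_1 x = x` on `L`. -/
lemma aux_sigma_one {x : E} (hx : x ∈ L) : sigma K E L N ι 1 x = x := by
  have h1 : (QuotientGroup.mk (sigma K E L N ι 1) : (E ≃ₐ[K] E) ⧸ L.fixingSubgroup)
      = QuotientGroup.mk 1 := by
    rw [aux_mk_sigma]; simp
  exact aux_apply_eq_of_mk_eq K E L h1 hx

/-- coefficient equivariance for `z ∈ Hset`. -/
lemma aux_coeff_equivariant {z : MonoidAlgebra E N} (hz : z ∈ Hset K E N c)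
    (g : E ≃ₐ[K] E) (n : N) : g (z.coeff n) = z.coeff (c g n) := by
  conv_rhs => rw [← hz g]
  rw [galTwist, MonoidAlgebra.coeff_ofCoeff]
  rw [show ((c g : N → N)) = ((c g).toEquiv : N → N) from rfl]
  rw [Finsupp.mapDomain_equiv_apply]
  simp [Finsupp.mapRange_apply]

lemma aux_hopfAct_univ (z : MonoidAlgebra E N) (x : E) :
    hopfAct K E L N ι z x = ∑ n : N, z.coeff n * sigma K E L N ι n x := by
  rw [hopfAct, Finsupp.sum_fintype]
  intro n; simp

lemma aux_hopfAct_add (z w : MonoidAlgebra E N) (x : E) :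
    hopfAct K E L N ι (z + w) x = hopfAct K E L N ι z x + hopfAct K E L N ι w x := by
  simp only [aux_hopfAct_univ]
  rw [← Finset.sum_add_distrib]
  refine Finset.sum_congr rfl fun n _ => ?_
  have h1 : (z + w).coeff n = z.coeff n + w.coeff n := rfl
  rw [h1, add_mul]

lemma aux_hopfAct_single (n : N) (r : E) (x : E) :
    hopfAct K E L N ι (MonoidAlgebra.single n r) x = r * sigma K E L N ι n x := by
  rw [hopfAct, MonoidAlgebra.coeff_single, Finsupp.sum_single_index]
  simp

lemma aux_hopfAct_zero (x : E) : hopfAct K E L N ι 0 x = 0 := by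
  rw [hopfAct, MonoidAlgebra.coeff_zero, Finsupp.sum_zero_index]

lemma aux_hopfAct_padic_smul (r : ℤ_[p]) (z : MonoidAlgebra E N) (x : E) :
    hopfAct K E L N ι (r • z) x = r • hopfAct K E L N ι z x := by
  simp only [aux_hopfAct_univ]
  rw [Finset.smul_sum]
  refine Finset.sum_congr rfl fun n _ => ?_
  have h1 : (r • z).coeff n = r • (z.coeff n) := rfl
  rw [h1, smul_mul_assoc]

/-- each `σ_n` commutes with the `ℤ_[p]`-algebra structure. -/
lemma aux_alg_commutes (g : E ≃ₐ[K] E) (r : ℤ_[p]) :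
    g (algebraMap ℤ_[p] E r) = algebraMap ℤ_[p] E r := by
  rw [IsScalarTower.algebraMap_apply ℤ_[p] ℚ_[p] E,
    IsScalarTower.algebraMap_apply ℚ_[p] K E]
  exact g.commutes _

lemma aux_algequiv_integral (g : E ≃ₐ[K] E) {x : E} (hx : IsIntegral ℤ_[p] x) :
    IsIntegral ℤ_[p] (g x) := by
  let f : E →ₐ[ℤ_[p]] E :=
    { toRingHom := (g : E →+* E), commutes' := fun r => aux_alg_commutes p K E g r }
  exact hx.map f

lemma aux_algebraMap_padic_mem_L (r : ℤ_[p]) : algebraMap ℤ_[p] E r ∈ L := by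
  rw [IsScalarTower.algebraMap_apply ℤ_[p] ℚ_[p] E,
    IsScalarTower.algebraMap_apply ℚ_[p] K E]
  exact L.algebraMap_mem _

lemma aux_smul_mem_L (r : ℤ_[p]) {x : E} (hx : x ∈ L) : r • x ∈ L := by
  rw [Algebra.smul_def]
  exact L.mul_mem (aux_algebraMap_padic_mem_L p K E L r) hx

/-- `hopfAct z x ∈ L` for `z ∈ Hset` and `x ∈ L`. -/
lemma aux_hopfAct_mem_L
    (hc : ∀ (g : E ≃ₐ[K] E) (n : N),
      ι (c g n) = lam K E L g * ι n * (lam K E L g)⁻¹)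
    {z : MonoidAlgebra E N} (hz : z ∈ Hset K E N c) {x : E} (hx : x ∈ L) :
    hopfAct K E L N ι z x ∈ L := by
  have hmem : hopfAct K E L N ι z x ∈ IntermediateField.fixedField L.fixingSubgroup := by
    rw [IntermediateField.fixedField, FixedPoints.intermediateField]
    change _ ∈ MulAction.fixedPoints _ _
    rw [MulAction.mem_fixedPoints]
    rintro ⟨g, hg⟩
    show g (hopfAct K E L N ι z x) = hopfAct K E L N ι z x
    rw [aux_hopfAct_univ, map_sum]
    have h4 : ∀ n : N, g (z.coeff n * sigma K E L N ι n x)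
        = z.coeff (c g n) * sigma K E L N ι (c g n) x := by
      intro n
      rw [map_mul, aux_coeff_equivariant K E N c hz g n,
        aux_sigma_fix K E L N ι c hc hg n hx]
    rw [Finset.sum_congr rfl fun n _ => h4 n]
    exact Fintype.sum_equiv (c g).toEquiv _ _ (fun n => rfl)
  rwa [IsGalois.fixedField_fixingSubgroup L] at hmem

/-- multiplicativity: `(z*w)·x = w·(z·x)` for `z ∈ Hset`, `x ∈ L`. -/
lemma aux_hopfAct_mul
    (hc : ∀ (g : E ≃ₐ[K] E) (n : N),
      ι (c g n) = lam K E L g * ι n * (lam K E L g)⁻¹)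
    {z : MonoidAlgebra E N} (hz : z ∈ Hset K E N c) (w : MonoidAlgebra E N)
    {x : E} (hx : x ∈ L) :
    hopfAct K E L N ι (z * w) x = hopfAct K E L N ι w (hopfAct K E L N ι z x) := by
  induction w using MonoidAlgebra.induction_linear with
  | zero => rw [mul_zero, aux_hopfAct_zero, aux_hopfAct_zero]
  | add f g hf hg => rw [mul_add, aux_hopfAct_add, aux_hopfAct_add, hf, hg]
  | single m r =>
    have hL : hopfAct K E L N ι (z * MonoidAlgebra.single m r) x
        = ∑ n : N, z.coeff n * r * sigma K E L N ι (n * m) x := by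
      rw [aux_hopfAct_univ]
      rw [← Equiv.sum_comp (Equiv.mulRight m)
        (fun k => (z * MonoidAlgebra.single m r : MonoidAlgebra E N).coeff k
          * sigma K E L N ι k x)]
      refine Finset.sum_congr rfl fun n _ => ?_
      have h1 : ((Equiv.mulRight m) n) = n * m := rfl
      rw [h1, MonoidAlgebra.coeff_mul_single_apply]
      simp
    have hR : hopfAct K E L N ι (MonoidAlgebra.single m r) (hopfAct K E L N ι z x)
        = ∑ n : N, r * (z.coeff (c (sigma K E L N ι m) n)
            * sigma K E L N ι (c (sigma K E L N ι m) n * m) x) := by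
      rw [aux_hopfAct_single, aux_hopfAct_univ, map_sum, Finset.mul_sum]
      refine Finset.sum_congr rfl fun n _ => ?_
      rw [map_mul, aux_coeff_equivariant K E N c hz (sigma K E L N ι m) n,
        aux_sigma_sigma K E L N ι c hc m n hx]
    rw [hL, hR]
    refine Fintype.sum_equiv (c (sigma K E L N ι m)).toEquiv.symm _ _ (fun n => ?_)
    have h6 : (c (sigma K E L N ι m)) ((c (sigma K E L N ι m)).toEquiv.symm n) = n :=
      (c (sigma K E L N ι m)).apply_symm_apply n
    rw [h6]
    ring

/-- `O_E[N]^G ⊆ A_H`. -/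
lemma aux_OEN_subset_AH
    (hc : ∀ (g : E ≃ₐ[K] E) (n : N),
      ι (c g n) = lam K E L g * ι n * (lam K E L g)⁻¹) :
    OEN p K E N c ⊆ AH p K E L N ι c := by
  rintro z ⟨hz1, hz2⟩
  refine ⟨hz1, fun x hx => ?_⟩
  obtain ⟨hxL, hxI⟩ := hx
  constructor
  · exact aux_hopfAct_mem_L K E L N ι c hc hz1 hxL
  · rw [aux_hopfAct_univ]
    refine Subalgebra.sum_mem _ fun n _ => ?_
    exact mul_mem (hz2 n) (aux_algequiv_integral p K E (sigma K E L N ι n) hxI)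

/-- `O_L` as a `ℤ_[p]`-submodule of `E`. -/
def OLsub : Submodule ℤ_[p] E where
  carrier := OL p K E L
  add_mem' := by
    rintro a b ⟨haL, haI⟩ ⟨hbL, hbI⟩
    exact ⟨L.add_mem haL hbL, add_mem haI hbI⟩
  zero_mem' := ⟨L.zero_mem, zero_mem _⟩
  smul_mem' := by
    rintro r x ⟨hxL, hxI⟩
    refine ⟨aux_smul_mem_L p K E L r hxL, ?_⟩
    rw [Algebra.smul_def]
    exact mul_mem ((integralClosure ℤ_[p] E).algebraMap_mem r) hxI

lemma aux_OLsub_finite : Module.Finite ℤ_[p] (OLsub p K E L) := by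
  have hnoeth : IsNoetherian ℤ_[p] (integralClosure ℤ_[p] E) :=
    IsIntegralClosure.isNoetherian ℤ_[p] ℚ_[p] E (integralClosure ℤ_[p] E)
  have hle : OLsub p K E L ≤ Subalgebra.toSubmodule (integralClosure ℤ_[p] E) := by
    rintro x ⟨_, hxI⟩
    exact hxI
  haveI hnoeth2 : IsNoetherian ℤ_[p] (Subalgebra.toSubmodule (integralClosure ℤ_[p] E)) :=
    hnoeth
  have hfg : (OLsub p K E L).FG := by
    have h1 : ((OLsub p K E L).comap
        (Subalgebra.toSubmodule (integralClosure ℤ_[p] E)).subtype).FG :=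
      IsNoetherian.noetherian _
    have h2 := h1.map (Subalgebra.toSubmodule (integralClosure ℤ_[p] E)).subtype
    rwa [Submodule.map_comap_subtype, inf_eq_right.mpr hle] at h2
  exact Module.Finite.iff_fg.mpr hfg

lemma aux_hopfAct_x_add (z : MonoidAlgebra E N) (a b : E) :
    hopfAct K E L N ι z (a + b) = hopfAct K E L N ι z a + hopfAct K E L N ι z b := by
  simp only [aux_hopfAct_univ]
  rw [← Finset.sum_add_distrib]
  refine Finset.sum_congr rfl fun n _ => ?_
  rw [map_add, mul_add]

lemma aux_hopfAct_x_smul (z : MonoidAlgebra E N) (r : ℤ_[p]) (a : E) :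
    hopfAct K E L N ι z (r • a) = r • hopfAct K E L N ι z a := by
  simp only [aux_hopfAct_univ]
  rw [Finset.smul_sum]
  refine Finset.sum_congr rfl fun n _ => ?_
  rw [Algebra.smul_def, map_mul, aux_alg_commutes p K E, ← Algebra.smul_def, mul_smul_comm]

lemma aux_hopfAct_finsum {α : Type} (s : Finset α) (f : α → MonoidAlgebra E N) (x : E) :
    hopfAct K E L N ι (∑ i ∈ s, f i) x = ∑ i ∈ s, hopfAct K E L N ι (f i) x := by
  classical
  induction s using Finset.induction_on with
  | empty => simp [aux_hopfAct_zero]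
  | insert _ _ hns ih =>
    rw [Finset.sum_insert hns, Finset.sum_insert hns, aux_hopfAct_add, ih]

/-- `A_H ⊆ MaxOrd`. -/
lemma aux_AH_subset_MaxOrd
    (hcard : Nat.card N = Nat.card ((E ≃ₐ[K] E) ⧸ L.fixingSubgroup))
    (htrans : ∀ x y : (E ≃ₐ[K] E) ⧸ L.fixingSubgroup, ∃ n : N, ι n x = y)
    (hc : ∀ (g : E ≃ₐ[K] E) (n : N),
      ι (c g n) = lam K E L g * ι n * (lam K E L g)⁻¹) :
    AH p K E L N ι c ⊆ MaxOrd p K E N c := by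
  classical
  rintro z ⟨hz1, hz2⟩
  refine ⟨hz1, ?_⟩
  haveI := aux_OLsub_finite p K E L
  let ε : Module.End ℤ_[p] (OLsub p K E L) :=
    { toFun := fun x => ⟨hopfAct K E L N ι z x.val, hz2 x.val x.2⟩
      map_add' := fun a b => Subtype.ext (aux_hopfAct_x_add K E L N ι z a.val b.val)
      map_smul' := fun r a => Subtype.ext (aux_hopfAct_x_smul p K E L N ι z r a.val) }
  have hε : IsIntegral ℤ_[p] ε := Algebra.IsIntegral.isIntegral ε
  obtain ⟨P, hPm, hP0⟩ := hε
  have hP0' : Polynomial.aeval ε P = 0 := by rwa [Polynomial.aeval_def]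
  have hpow : ∀ (i : ℕ) (x : OLsub p K E L),
      (((ε ^ i) x : OLsub p K E L) : E) = hopfAct K E L N ι (z ^ i) x.val := by
    intro i
    induction i with
    | zero =>
      intro x
      rw [pow_zero, pow_zero, MonoidAlgebra.one_def, aux_hopfAct_single, one_mul,
        aux_sigma_one K E L N ι x.2.1]
      rfl
    | succ i ih =>
      intro x
      rw [pow_succ ε i, Module.End.mul_apply, ih (ε x),
        show ((ε x : OLsub p K E L) : E) = hopfAct K E L N ι z x.val from rfl,
        pow_succ' z i, aux_hopfAct_mul K E L N ι c hc hz1 (z ^ i) x.2.1]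
  have haev : ∀ x : OLsub p K E L, hopfAct K E L N ι (Polynomial.aeval z P) x.val = 0 := by
    intro x
    rw [Polynomial.aeval_eq_sum_range (R := ℤ_[p]) z, aux_hopfAct_finsum]
    have h1 : ∀ i ∈ Finset.range (P.natDegree + 1),
        hopfAct K E L N ι (P.coeff i • z ^ i) x.val
          = P.coeff i • (((ε ^ i) x : OLsub p K E L) : E) := by
      intro i _
      rw [aux_hopfAct_padic_smul, hpow i x]
    rw [Finset.sum_congr rfl h1]
    have h2 : ∑ i ∈ Finset.range (P.natDegree + 1),
        P.coeff i • (((ε ^ i) x : OLsub p K E L) : E)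
          = (((Polynomial.aeval ε P) x : OLsub p K E L) : E) := by
      rw [Polynomial.aeval_eq_sum_range (R := ℤ_[p]) ε]
      rw [LinearMap.sum_apply]
      rw [Submodule.coe_sum]
      refine Finset.sum_congr rfl fun i _ => ?_
      rw [LinearMap.smul_apply]
      rfl
    rw [h2, hP0']
    rfl
  have hL0 : ∀ y ∈ L, hopfAct K E L N ι (Polynomial.aeval z P) y = 0 := by
    intro y hy
    haveI : Algebra.IsAlgebraic ℚ_[p] E := Algebra.IsAlgebraic.of_finite ℚ_[p] E
    have halg : IsAlgebraic ℤ_[p] y :=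
      (IsFractionRing.isAlgebraic_iff ℤ_[p] ℚ_[p] E).mpr (Algebra.IsAlgebraic.isAlgebraic y)
    have hinj : Function.Injective (algebraMap ℤ_[p] E) := by
      rw [IsScalarTower.algebraMap_eq ℤ_[p] ℚ_[p] E]
      refine (algebraMap ℚ_[p] E).injective.comp ?_
      intro a b hab
      have : (a : ℚ_[p]) = (b : ℚ_[p]) := by
        rwa [PadicInt.algebraMap_apply, PadicInt.algebraMap_apply] at hab
      exact Subtype.coe_injective this
    obtain ⟨d, hd0, hdI⟩ := halg.exists_integral_multiple
    have hmem : d • y ∈ OLsub p K E L := by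
      refine ⟨aux_smul_mem_L p K E L d hy, ?_⟩
      exact hdI
    have h3 := haev ⟨d • y, hmem⟩
    rw [show (⟨d • y, hmem⟩ : OLsub p K E L).val = d • y from rfl,
      aux_hopfAct_x_smul p K E L N ι] at h3
    have h4 : algebraMap ℤ_[p] E d ≠ 0 := fun h => hd0 (hinj (by rwa [map_zero]))
    rw [Algebra.smul_def] at h3
    rcases mul_eq_zero.mp h3 with h | h
    · exact absurd h h4
    · exact h
  -- Dedekind linear independence of the embeddings σ_n on L
  let fam : N → (↥L →* E) := fun n =>
    (((sigma K E L N ι n : E ≃ₐ[K] E) : E →+* E).comp (algebraMap ↥L E)).toMonoidHom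
  have hfam_inj : Function.Injective fam := by
    intro n m hnm
    have hx : ∀ x : ↥L, sigma K E L N ι n x.val = sigma K E L N ι m x.val := by
      intro x
      exact DFunLike.congr_fun hnm x
    have hmk : (QuotientGroup.mk (sigma K E L N ι n)
        : (E ≃ₐ[K] E) ⧸ L.fixingSubgroup) = QuotientGroup.mk (sigma K E L N ι m) := by
      rw [QuotientGroup.eq]
      rw [L.mem_fixingSubgroup_iff]
      intro x hxL
      have h5 := hx ⟨x, hxL⟩
      have h6 : ((sigma K E L N ι n)⁻¹ * sigma K E L N ι m) x
          = (sigma K E L N ι n)⁻¹ (sigma K E L N ι n x) := by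
        rw [AlgEquiv.mul_apply, ← h5]
      rw [h6, ← AlgEquiv.mul_apply, inv_mul_cancel]
      rfl
    rw [aux_mk_sigma K E L N ι n, aux_mk_sigma K E L N ι m] at hmk
    set t := (ι n)⁻¹ (QuotientGroup.mk 1 : (E ≃ₐ[K] E) ⧸ L.fixingSubgroup) with ht
    have h5 : ι n t = QuotientGroup.mk 1 := by
      rw [ht]; exact Equiv.apply_symm_apply _ _
    have h6 : ι m t = QuotientGroup.mk 1 := by
      rw [hmk]; exact Equiv.apply_symm_apply _ _
    haveI : Fintype ((E ≃ₐ[K] E) ⧸ L.fixingSubgroup) := Fintype.ofFinite _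
    have hsurj : Function.Surjective (fun k : N => ι k t) := fun y => htrans t y
    have hbij : Function.Bijective (fun k : N => ι k t) :=
      (Fintype.bijective_iff_surjective_and_card _).mpr
        ⟨hsurj, by rw [← Nat.card_eq_fintype_card, ← Nat.card_eq_fintype_card]; exact hcard⟩
    exact hbij.injective (h5.trans h6.symm)
  have hli : LinearIndependent E (fun n : N => ((fam n : ↥L →* E) : ↥L → E)) :=
    (linearIndependent_monoidHom ↥L E).comp fam hfam_inj
  have hcoeffs : ∀ n : N, (Polynomial.aeval z P : MonoidAlgebra E N).coeff n = 0 := by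
    refine Fintype.linearIndependent_iff.mp hli
      (fun n => (Polynomial.aeval z P : MonoidAlgebra E N).coeff n) ?_
    funext x
    rw [Finset.sum_apply]
    have h7 : ∀ n : N, ((Polynomial.aeval z P : MonoidAlgebra E N).coeff n
          • ((fam n : ↥L →* E) : ↥L → E)) x
        = (Polynomial.aeval z P : MonoidAlgebra E N).coeff n * sigma K E L N ι n x.val :=
      fun n => rfl
    rw [Finset.sum_congr rfl fun n _ => h7 n, ← aux_hopfAct_univ, hL0 x.val x.2]
    rfl
  have hzero : Polynomial.aeval z P = 0 :=
    MonoidAlgebra.coeff_injective (by ext n; exact hcoeffs n)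
  exact ⟨P, hPm, by rwa [Polynomial.aeval_def] at hzero⟩

lemma aux_card_quot :
    Nat.card ((E ≃ₐ[K] E) ⧸ L.fixingSubgroup) = Module.finrank K L := by
  classical
  have h1 : Nat.card ((E ≃ₐ[K] E) ⧸ L.fixingSubgroup) * Nat.card L.fixingSubgroup
      = Nat.card (E ≃ₐ[K] E) :=
    (Subgroup.card_eq_card_quotient_mul_card_subgroup L.fixingSubgroup).symm
  have h2 : Nat.card (E ≃ₐ[K] E) = Module.finrank K E := by
    exact IsGalois.card_aut_eq_finrank K E
  have h3 : Nat.card L.fixingSubgroup = Module.finrank L E := by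
    rw [Nat.card_congr (L.fixingSubgroupEquiv).toEquiv]
    exact IsGalois.card_aut_eq_finrank L E
  have h4 : Module.finrank K L * Module.finrank L E = Module.finrank K E :=
    Module.finrank_mul_finrank K L E
  have h5 : Module.finrank L E ≠ 0 := Module.finrank_pos.ne'
  apply Nat.eq_of_mul_eq_mul_right (Nat.pos_of_ne_zero h5)
  rw [h3] at h1
  rw [h1, h2, ← h4]

lemma aux_MaxOrd_subset_OEN (hpn : ¬ p ∣ Fintype.card N) :
    MaxOrd p K E N c ⊆ OEN p K E N c := by
  rintro z ⟨h1, h2⟩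
  exact ⟨h1, fun n => aux_coeff_integral hpn z h2 n⟩

end AuxCtx

/-- if `p ∤ [L:K]` then `A_H = O_E[N]^G`, and this is the unique
maximal `O_K`-order in `H` (the integral closure of `O_K` in `H`). -/
theorem statement9
    (p : ℕ) [Fact p.Prime]
    (K E : Type) [Field K] [Field E]
    [Algebra ℚ_[p] K] [FiniteDimensional ℚ_[p] K]
    [Algebra ℚ_[p] E] [FiniteDimensional ℚ_[p] E]
    [Algebra ℤ_[p] E] [IsScalarTower ℤ_[p] ℚ_[p] E]
    [Algebra K E] [IsScalarTower ℚ_[p] K E] [FiniteDimensional K E] [IsGalois K E]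
    (L : IntermediateField K E)
    (hclosure : IntermediateField.normalClosure K L E = ⊤)
    (hdeg : ¬ (p ∣ Module.finrank K L))
    (N : Type) [CommGroup N] [Fintype N]
    (ι : N →* Equiv.Perm ((E ≃ₐ[K] E) ⧸ L.fixingSubgroup))
    (hι : Function.Injective ι)
    (hcard : Nat.card N = Nat.card ((E ≃ₐ[K] E) ⧸ L.fixingSubgroup))
    (htrans : ∀ x y : (E ≃ₐ[K] E) ⧸ L.fixingSubgroup, ∃ n : N, ι n x = y)
    (c : (E ≃ₐ[K] E) →* MulAut N)
    (hc : ∀ (g : E ≃ₐ[K] E) (n : N),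
      ι (c g n) = lam K E L g * ι n * (lam K E L g)⁻¹) :
    AH p K E L N ι c = OEN p K E N c ∧ AH p K E L N ι c = MaxOrd p K E N c := by
  have hpn : ¬ p ∣ Fintype.card N := by
    rw [← Nat.card_eq_fintype_card, hcard, aux_card_quot K E L]
    exact hdeg
  have hMO := aux_MaxOrd_subset_OEN p K E N c hpn
  have hOA := aux_OEN_subset_AH p K E L N ι c hc
  have hAM := aux_AH_subset_MaxOrd p K E L N ι c hcard htrans hc
  constructor
  · exact Set.Subset.antisymm (fun z hz => hMO (hAM hz)) hOA
  · exact Set.Subset.antisymm hAM (fun z hz => hOA (hMO hz))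
end
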